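/- For every n ≥ 1, the type B Eulerian polynomial satisfies Σ_{σ ∈ B_n} t^{des_B(σ)} = Σ_{w ∈ S_n} 4^{pk(0w)} t^{pk(0w)} (1+t)^{n−2·pk(0w)} as polynomials in t. -/

import Mathlib

open Polynomial Finset

attribute [local instance] Classical.propDecidable

/-- The value `w_i` of the permutation word `w = w_1 ⋯ w_n` of `[n] = {1,…,n}`
(one-indexed); by convention the value is `0` outside the range, so `w_0 = 0`. -/
def pval (n : ℕ) (w : Equiv.Perm (Fin n)) (i : ℕ) : ℕ :=
  if h : 1 ≤ i ∧ i ≤ n then ((w ⟨i - 1, by omega⟩ : Fin n) : ℕ) + 1 else 0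

/-- The set of peaks of `0w`: positions `i ∈ [n-1]` with `w_{i-1} < w_i > w_{i+1}`
(where `w_0 = 0`). -/
def pkSet (n : ℕ) (w : Equiv.Perm (Fin n)) : Finset ℕ :=
  (Finset.Icc 1 (n - 1)).filter fun i =>
    pval n w (i - 1) < pval n w i ∧ pval n w (i + 1) < pval n w i

/-- `pk(0w)`, the number of peaks of `0w`. -/
def pk (n : ℕ) (w : Equiv.Perm (Fin n)) : ℕ := (pkSet n w).card

/-- A signed permutation `σ ∈ B_n`, encoded as an (unsigned) permutation together
with a sign for each position, evaluated as an integer sequence `σ(1), …, σ(n)`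
(one-indexed, with value `0` outside the range, so `σ(0) = 0`). -/
def sval (n : ℕ) (σ : Equiv.Perm (Fin n) × (Fin n → Bool)) (i : ℕ) : ℤ :=
  if h : 1 ≤ i ∧ i ≤ n then
    (if σ.2 ⟨i - 1, by omega⟩ then -(((σ.1 ⟨i - 1, by omega⟩ : Fin n) : ℕ) + 1 : ℤ)
     else (((σ.1 ⟨i - 1, by omega⟩ : Fin n) : ℕ) + 1 : ℤ))
  else 0

/-- The type B descent number: `des_B(σ) = #{i ∈ {0,…,n-1} : σ(i) > σ(i+1)}`, with `σ(0) = 0`. -/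
def desB (n : ℕ) (σ : Equiv.Perm (Fin n) × (Fin n → Bool)) : ℕ :=
  ((Finset.range n).filter fun i => sval n σ (i + 1) < sval n σ i).card

/-! ### Auxiliary machinery -/

/-- Descent table: given the sign `s` of position `i` (`true` = negative), the sign `s'`
of position `i+1`, and whether the unsigned word has a descent at this gap (`gb`),
whether the signed word has a descent there. -/
def dtab (s s' gb : Bool) : Bool := if s then (s' && !gb) else (s' || gb)

noncomputable def uvec (gb s : Bool) : Polynomial ℤ :=
  if gb then (if s then 1 else X) else 1

noncomputable def rvec (gb s : Bool) : Polynomial ℤ :=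
  if gb then 1 else (if s then X else 1)

noncomputable def Tr (x y : Bool) : Polynomial ℤ :=
  rvec x false * uvec y false + rvec x true * uvec y true

lemma X_pow_dtab (s s' gb : Bool) :
    (X : Polynomial ℤ) ^ (if dtab s s' gb = true then 1 else 0) = uvec gb s * rvec gb s' := by
  cases s <;> cases s' <;> cases gb <;> simp [dtab, uvec, rvec]

/-- Sign of position `i` (one-indexed) given the sign vector `ε`; `false` (positive) outside. -/
def shat (m : ℕ) (ε : Fin m → Bool) (i : ℕ) : Bool :=
  if h : 1 ≤ i ∧ i ≤ m then ε ⟨i - 1, by omega⟩ else false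

/-- Number of signed descents, computed through the table. -/
def Dstat (g : ℕ → Bool) (m : ℕ) (ε : Fin m → Bool) : ℕ :=
  ((Finset.range m).filter fun i => dtab (shat m ε i) (shat m ε (i + 1)) (g i) = true).card

lemma shat_snoc (m : ℕ) (εi : Fin (m + 1) → Bool) (b : Bool) (i : ℕ) (hi : i ≤ m + 1) :
    shat (m + 2) (Fin.snoc εi b) i = shat (m + 1) εi i := by
  unfold shat
  by_cases h : 1 ≤ i ∧ i ≤ m + 1
  · rw [dif_pos ⟨h.1, by omega⟩, dif_pos h]
    have : (⟨i - 1, by omega⟩ : Fin (m + 2)) = Fin.castSucc ⟨i - 1, by omega⟩ := rfl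
    rw [this, Fin.snoc_castSucc]
  · rw [dif_neg (by omega), dif_neg h]

lemma shat_snoc_top (m : ℕ) (εi : Fin (m + 1) → Bool) (b : Bool) :
    shat (m + 2) (Fin.snoc εi b) (m + 2) = b := by
  unfold shat
  rw [dif_pos ⟨by omega, le_refl _⟩]
  have : (⟨m + 2 - 1, by omega⟩ : Fin (m + 2)) = Fin.last (m + 1) := rfl
  rw [this, Fin.snoc_last]

lemma shat_top (m : ℕ) (ε : Fin (m + 1) → Bool) :
    shat (m + 1) ε (m + 1) = ε (Fin.last m) := by
  unfold shat
  rw [dif_pos ⟨by omega, le_refl _⟩]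
  congr 1

lemma Dstat_snoc (g : ℕ → Bool) (m : ℕ) (εi : Fin (m + 1) → Bool) (b : Bool) :
    Dstat g (m + 2) (Fin.snoc εi b) =
      Dstat g (m + 1) εi +
        (if dtab (εi (Fin.last m)) b (g (m + 1)) = true then 1 else 0) := by
  unfold Dstat
  rw [Finset.range_add_one, Finset.filter_insert]
  have hsplit : ((Finset.range (m + 1)).filter fun i =>
      dtab (shat (m + 2) (Fin.snoc εi b) i) (shat (m + 2) (Fin.snoc εi b) (i + 1)) (g i) = true)
      = ((Finset.range (m + 1)).filter fun i =>
      dtab (shat (m + 1) εi i) (shat (m + 1) εi (i + 1)) (g i) = true) := by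
    apply Finset.filter_congr
    intro i hi
    rw [Finset.mem_range] at hi
    rw [shat_snoc m εi b i (by omega), shat_snoc m εi b (i + 1) (by omega)]
  have htop : shat (m + 2) (Fin.snoc εi b) (m + 1) = εi (Fin.last m) := by
    rw [shat_snoc m εi b (m + 1) (le_refl _), shat_top]
  have htop2 : shat (m + 2) (Fin.snoc εi b) (m + 1 + 1) = b := shat_snoc_top m εi b
  rw [htop, htop2, hsplit]
  split_ifs with h
  · rw [Finset.card_insert_of_notMem (by simp)]
  · rfl

lemma keyA (g : ℕ → Bool) (hg0 : g 0 = false) :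
    ∀ m : ℕ, ∀ s : Bool,
      (∑ ε ∈ Finset.univ.filter (fun ε : Fin (m + 1) → Bool => ε (Fin.last m) = s),
          (X : Polynomial ℤ) ^ Dstat g (m + 1) ε) =
        (∏ i ∈ Finset.range m, Tr (g i) (g (i + 1))) * rvec (g m) s := by
  intro m
  induction m with
  | zero =>
    intro s
    have hD : ∀ ε : Fin 1 → Bool, Dstat g 1 ε = if ε 0 = true then 1 else 0 := by
      intro ε
      have h0 : shat 1 ε 0 = false := by unfold shat; rw [dif_neg (by omega)]
      have h1 : shat 1 ε 1 = ε 0 := by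
        unfold shat; rw [dif_pos ⟨le_refl _, le_refl _⟩]; exact congrArg ε (Fin.ext rfl)
      unfold Dstat
      rw [Finset.range_one, Finset.filter_singleton]
      simp only [h0, h1, hg0]
      cases hb : ε 0 <;> simp [dtab]
    rw [Finset.sum_filter,
      ← Equiv.sum_comp (Equiv.funUnique (Fin 1) Bool).symm
        (fun ε : Fin 1 → Bool =>
          if ε (Fin.last 0) = s then (X : Polynomial ℤ) ^ Dstat g (0 + 1) ε else 0),
      Fintype.sum_bool]
    have happ : ∀ b : Bool, ((Equiv.funUnique (Fin 1) Bool).symm b) (Fin.last 0) = b := fun b => rfl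
    have hD' : ∀ b : Bool, Dstat g (0 + 1) ((Equiv.funUnique (Fin 1) Bool).symm b)
        = if b = true then 1 else 0 := by
      intro b
      have := hD ((Equiv.funUnique (Fin 1) Bool).symm b)
      simpa using this
    simp only [happ, hD']
    cases s <;> simp [rvec, hg0]
  | succ m ih =>
    intro s'
    -- peel off the last coordinate via snoc
    have hequiv := Equiv.sum_comp (Fin.snocEquiv (fun _ : Fin (m + 2) => Bool))
      (fun ε : Fin (m + 2) → Bool =>
        if ε (Fin.last (m + 1)) = s' then (X : Polynomial ℤ) ^ Dstat g (m + 2) ε else 0)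
    rw [Finset.sum_filter, ← hequiv, Fintype.sum_prod_type]
    have hterm : ∀ (b : Bool) (εi : Fin (m + 1) → Bool),
        (fun ε : Fin (m + 2) → Bool =>
          if ε (Fin.last (m + 1)) = s' then (X : Polynomial ℤ) ^ Dstat g (m + 2) ε else 0)
          (Fin.snocEquiv (fun _ => Bool) (b, εi)) =
        if b = s' then
          (X : Polynomial ℤ) ^ Dstat g (m + 1) εi *
            (uvec (g (m + 1)) (εi (Fin.last m)) * rvec (g (m + 1)) s') else 0 := by
      intro b εi
      have hs : (Fin.snocEquiv (fun _ : Fin (m + 2) => Bool)) (b, εi) = Fin.snoc εi b := by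
        funext j; rfl
      rw [hs]
      show (if (Fin.snoc εi b : Fin (m + 2) → Bool) (Fin.last (m + 1)) = s' then
          (X : Polynomial ℤ) ^ Dstat g (m + 2) (Fin.snoc εi b) else 0) = _
      rw [Fin.snoc_last]
      split_ifs with h
      · subst h
        rw [Dstat_snoc, pow_add, X_pow_dtab]
      · rfl
    simp only [hterm]
    rw [Fintype.sum_bool]
    have hcollapse : ∀ b : Bool, (∑ εi : Fin (m + 1) → Bool,
        if b = s' then (X : Polynomial ℤ) ^ Dstat g (m + 1) εi *
          (uvec (g (m + 1)) (εi (Fin.last m)) * rvec (g (m + 1)) s') else 0) =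
        if b = s' then (∑ εi : Fin (m + 1) → Bool,
          (X : Polynomial ℤ) ^ Dstat g (m + 1) εi *
          (uvec (g (m + 1)) (εi (Fin.last m)) * rvec (g (m + 1)) s')) else 0 := by
      intro b; split_ifs <;> simp
    rw [hcollapse, hcollapse]
    have hone : (if (true : Bool) = s' then (∑ εi : Fin (m + 1) → Bool,
          (X : Polynomial ℤ) ^ Dstat g (m + 1) εi *
          (uvec (g (m + 1)) (εi (Fin.last m)) * rvec (g (m + 1)) s')) else 0) +
        (if (false : Bool) = s' then (∑ εi : Fin (m + 1) → Bool,
          (X : Polynomial ℤ) ^ Dstat g (m + 1) εi *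
          (uvec (g (m + 1)) (εi (Fin.last m)) * rvec (g (m + 1)) s')) else 0) =
        ∑ εi : Fin (m + 1) → Bool,
          (X : Polynomial ℤ) ^ Dstat g (m + 1) εi *
          (uvec (g (m + 1)) (εi (Fin.last m)) * rvec (g (m + 1)) s') := by
      cases s' <;> simp
    rw [hone]
    -- now split the sum by the value of the last coordinate of εi
    rw [← Finset.sum_fiberwise Finset.univ (fun εi : Fin (m + 1) → Bool => εi (Fin.last m))
      (fun εi => (X : Polynomial ℤ) ^ Dstat g (m + 1) εi *
        (uvec (g (m + 1)) (εi (Fin.last m)) * rvec (g (m + 1)) s'))]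
    have hfiber : ∀ s : Bool,
        (∑ εi ∈ Finset.univ.filter (fun εi : Fin (m + 1) → Bool => εi (Fin.last m) = s),
          (X : Polynomial ℤ) ^ Dstat g (m + 1) εi *
          (uvec (g (m + 1)) (εi (Fin.last m)) * rvec (g (m + 1)) s')) =
        (∏ i ∈ Finset.range m, Tr (g i) (g (i + 1))) * rvec (g m) s *
          (uvec (g (m + 1)) s * rvec (g (m + 1)) s') := by
      intro s
      rw [← ih s, Finset.sum_mul]
      apply Finset.sum_congr rfl
      intro εi hεi
      rw [Finset.mem_filter] at hεi
      rw [hεi.2]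
    rw [Fintype.sum_bool, hfiber, hfiber, Finset.prod_range_succ]
    simp only [Tr]
    ring

/-- Count of false→true transitions. -/
def pcnt (h : ℕ → Bool) (m : ℕ) : ℕ :=
  ((Finset.range m).filter fun i => h i = false ∧ h (i + 1) = true).card

/-- Count of true→false transitions. -/
def qcnt (h : ℕ → Bool) (m : ℕ) : ℕ :=
  ((Finset.range m).filter fun i => h i = true ∧ h (i + 1) = false).card

lemma pcnt_succ (h : ℕ → Bool) (m : ℕ) :
    pcnt h (m + 1) = pcnt h m + (if h m = false ∧ h (m + 1) = true then 1 else 0) := by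
  unfold pcnt
  rw [Finset.range_add_one, Finset.filter_insert]
  split_ifs with hc
  · rw [Finset.card_insert_of_notMem (by simp)]
  · simp

lemma qcnt_succ (h : ℕ → Bool) (m : ℕ) :
    qcnt h (m + 1) = qcnt h m + (if h m = true ∧ h (m + 1) = false then 1 else 0) := by
  unfold qcnt
  rw [Finset.range_add_one, Finset.filter_insert]
  split_ifs with hc
  · rw [Finset.card_insert_of_notMem (by simp)]
  · simp

lemma keyB (h : ℕ → Bool) :
    ∀ m : ℕ, (∏ i ∈ Finset.range m, Tr (h i) (h (i + 1))) =
        (2 * X) ^ pcnt h m * 2 ^ qcnt h m *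
          (1 + X) ^ (m - (pcnt h m + qcnt h m)) ∧ pcnt h m + qcnt h m ≤ m := by
  intro m
  induction m with
  | zero => simp [pcnt, qcnt]
  | succ m ih =>
    obtain ⟨ihp, ihl⟩ := ih
    have hps := pcnt_succ h m
    have hqs := qcnt_succ h m
    constructor
    · rw [Finset.prod_range_succ, ihp, hps, hqs]
      cases hm : h m <;> cases hm1 : h (m + 1)
      · rw [if_neg (by simp), if_neg (by simp)]
        have hT : Tr false false = 1 + X := by simp [Tr, rvec, uvec]
        have he : m + 1 - (pcnt h m + 0 + (qcnt h m + 0)) =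
            (m - (pcnt h m + qcnt h m)) + 1 := by omega
        rw [hT, he]
        simp only [add_zero]
        rw [pow_succ]; ring
      · rw [if_pos ⟨rfl, rfl⟩, if_neg (by simp)]
        have hT : Tr false true = 2 * X := by simp [Tr, rvec, uvec]; ring
        have he : m + 1 - (pcnt h m + 1 + (qcnt h m + 0)) = m - (pcnt h m + qcnt h m) := by omega
        rw [hT, he]
        simp only [add_zero]
        rw [pow_succ]; ring
      · rw [if_neg (by simp), if_pos ⟨rfl, rfl⟩]
        have hT : Tr true false = 2 := by simp [Tr, rvec, uvec]; ring
        have he : m + 1 - (pcnt h m + 0 + (qcnt h m + 1)) = m - (pcnt h m + qcnt h m) := by omega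
        rw [hT, he]
        simp only [add_zero]
        rw [pow_succ]; ring
      · rw [if_neg (by simp), if_neg (by simp)]
        have hT : Tr true true = 1 + X := by simp [Tr, rvec, uvec]; ring
        have he : m + 1 - (pcnt h m + 0 + (qcnt h m + 0)) =
            (m - (pcnt h m + qcnt h m)) + 1 := by omega
        rw [hT, he]
        simp only [add_zero]
        rw [pow_succ]; ring
    · rw [hps, hqs]
      cases hm : h m <;> cases hm1 : h (m + 1)
      · rw [if_neg (by simp), if_neg (by simp)]; omega
      · rw [if_pos ⟨rfl, rfl⟩, if_neg (by simp)]; omega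
      · rw [if_neg (by simp), if_pos ⟨rfl, rfl⟩]; omega
      · rw [if_neg (by simp), if_neg (by simp)]; omega

lemma keyC (h : ℕ → Bool) (hh0 : h 0 = false) :
    ∀ m : ℕ, (h m = false → pcnt h m = qcnt h m) ∧ (h m = true → pcnt h m = qcnt h m + 1) := by
  intro m
  induction m with
  | zero =>
    constructor
    · intro; simp [pcnt, qcnt]
    · intro hc; rw [hh0] at hc; exact absurd hc (by simp)
  | succ m ih =>
    rw [pcnt_succ, qcnt_succ]
    cases hm : h m <;> cases hm1 : h (m + 1) <;> simp only [hm, hm1] <;> constructor <;>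
        intro hc <;> simp_all <;> omega

lemma pval_zero (n : ℕ) (w : Equiv.Perm (Fin n)) : pval n w 0 = 0 := by
  unfold pval; rw [dif_neg (by omega)]

lemma pval_pos (n : ℕ) (w : Equiv.Perm (Fin n)) (i : ℕ) (h1 : 1 ≤ i) (h2 : i ≤ n) :
    1 ≤ pval n w i := by
  unfold pval; rw [dif_pos ⟨h1, h2⟩]; omega

lemma pval_ne (n : ℕ) (w : Equiv.Perm (Fin n)) (i : ℕ) (h1 : 1 ≤ i) (h2 : i + 1 ≤ n) :
    pval n w i ≠ pval n w (i + 1) := by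
  unfold pval
  rw [dif_pos ⟨h1, by omega⟩, dif_pos ⟨by omega, h2⟩]
  intro hcon
  have hv : (w ⟨i - 1, by omega⟩ : Fin n) = w ⟨i + 1 - 1, by omega⟩ := by
    apply Fin.ext; omega
  have := w.injective hv
  have : i - 1 = i + 1 - 1 := congrArg Fin.val this
  omega

/-- The unsigned descent pattern of `w`. -/
def gpat (n : ℕ) (w : Equiv.Perm (Fin n)) (i : ℕ) : Bool :=
  decide (pval n w (i + 1) < pval n w i)

lemma gpat_zero (n : ℕ) (w : Equiv.Perm (Fin n)) : gpat n w 0 = false := by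
  unfold gpat
  rw [pval_zero]
  simp

lemma sval_eq (n : ℕ) (w : Equiv.Perm (Fin n)) (ε : Fin n → Bool) (j : ℕ) :
    sval n (w, ε) j = if shat n ε j = true then -(pval n w j : ℤ) else (pval n w j) := by
  unfold sval shat pval
  by_cases h : 1 ≤ j ∧ j ≤ n
  · rw [dif_pos h, dif_pos h, dif_pos h]
    split_ifs with h1 h2 h3 <;> push_cast <;> first | ring | (exact absurd h1 ‹_›) | (exact absurd ‹_› h1)
  · rw [dif_neg h, dif_neg h, dif_neg h]
    simp

lemma descent_iff (n : ℕ) (w : Equiv.Perm (Fin n)) (ε : Fin n → Bool) (i : ℕ) (hi : i < n) :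
    (sval n (w, ε) (i + 1) < sval n (w, ε) i) ↔
      dtab (shat n ε i) (shat n ε (i + 1)) (gpat n w i) = true := by
  rw [sval_eq, sval_eq]
  have hb : 1 ≤ pval n w (i + 1) := pval_pos n w (i + 1) (by omega) (by omega)
  by_cases hi0 : i = 0
  · subst hi0
    have hs0 : shat n ε 0 = false := by unfold shat; rw [dif_neg (by omega)]
    rw [hs0, gpat_zero, pval_zero]
    cases hs1 : shat n ε 1 <;> simp [dtab] <;> exact hb
  · have ha : 1 ≤ pval n w i := pval_pos n w i (by omega) (by omega)
    have hne : pval n w i ≠ pval n w (i + 1) := pval_ne n w i (by omega) (by omega)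
    unfold gpat
    cases hs : shat n ε i <;> cases hs1 : shat n ε (i + 1) <;>
      simp [dtab, decide_eq_true_eq] <;> omega

lemma desB_eq_Dstat (n : ℕ) (w : Equiv.Perm (Fin n)) (ε : Fin n → Bool) :
    desB n (w, ε) = Dstat (gpat n w) n ε := by
  unfold desB Dstat
  congr 1
  apply Finset.filter_congr
  intro i hi
  rw [Finset.mem_range] at hi
  exact descent_iff n w ε i hi

lemma pcnt_eq_pk (n : ℕ) (hn : 1 ≤ n) (w : Equiv.Perm (Fin n)) :
    pcnt (fun i => if i < n then gpat n w i else false) n = pk n w := by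
  unfold pcnt pk pkSet
  apply Finset.card_bij (fun i _ => i + 1)
  · intro i hi
    rw [Finset.mem_filter, Finset.mem_range] at hi
    obtain ⟨hir, hif0, hit0⟩ := hi
    have hif : (if i < n then gpat n w i else false) = false := hif0
    have hit : (if i + 1 < n then gpat n w (i + 1) else false) = true := hit0
    have hi1n : i + 1 < n := by
      by_contra hcon
      rw [if_neg (by omega)] at hit
      exact absurd hit (by simp)
    rw [if_pos hi1n] at hit
    have hgt : pval n w (i + 1 + 1) < pval n w (i + 1) := by
      have := of_decide_eq_true hit
      exact this
    rw [Finset.mem_filter, Finset.mem_Icc]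
    refine ⟨⟨by omega, by omega⟩, ?_, ?_⟩
    · show pval n w (i + 1 - 1) < pval n w (i + 1)
      have hred : i + 1 - 1 = i := by omega
      rw [hred]
      by_cases hi0 : i = 0
      · subst hi0; rw [pval_zero]; exact pval_pos n w 1 (le_refl _) (by omega)
      · rw [if_pos (by omega)] at hif
        have hnlt : ¬ (pval n w (i + 1) < pval n w i) := of_decide_eq_false hif
        have hne : pval n w i ≠ pval n w (i + 1) := pval_ne n w i (by omega) (by omega)
        omega
    · exact hgt
  · intro a ha b hb hab; omega
  · intro j hj
    rw [Finset.mem_filter, Finset.mem_Icc] at hj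
    obtain ⟨⟨hj1, hj2⟩, hjp1, hjp2⟩ := hj
    refine ⟨j - 1, ?_, by omega⟩
    rw [Finset.mem_filter, Finset.mem_range]
    have hjn : j < n := by omega
    have hjn1 : j - 1 < n := by omega
    refine ⟨by omega, ?_, ?_⟩
    · show (if j - 1 < n then gpat n w (j - 1) else false) = false
      rw [if_pos hjn1]
      unfold gpat
      have : pval n w (j - 1 + 1) = pval n w j := by congr 1; omega
      rw [this]
      have : ¬ (pval n w j < pval n w (j - 1)) := by
        have := hjp1
        omega
      simp [this]
    · show (if j - 1 + 1 < n then gpat n w (j - 1 + 1) else false) = true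
      have : j - 1 + 1 = j := by omega
      rw [this, if_pos hjn]
      unfold gpat
      simp [hjp2]

lemma perm_sum (n : ℕ) (hn : 1 ≤ n) (w : Equiv.Perm (Fin n)) :
    (∑ ε : Fin n → Bool, (X : Polynomial ℤ) ^ desB n (w, ε)) =
      (4 : Polynomial ℤ) ^ pk n w * X ^ pk n w * (1 + X) ^ (n - 2 * pk n w) := by
  obtain ⟨m, rfl⟩ : ∃ m, n = m + 1 := ⟨n - 1, by omega⟩
  set g := gpat (m + 1) w with hg
  have hg0 : g 0 = false := gpat_zero (m + 1) w
  -- rewrite desB as Dstat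
  have hstep1 : (∑ ε : Fin (m + 1) → Bool, (X : Polynomial ℤ) ^ desB (m + 1) (w, ε)) =
      ∑ ε : Fin (m + 1) → Bool, (X : Polynomial ℤ) ^ Dstat g (m + 1) ε := by
    apply Finset.sum_congr rfl
    intro ε _
    rw [desB_eq_Dstat]
  rw [hstep1]
  -- split by the last sign and apply keyA
  rw [← Finset.sum_fiberwise Finset.univ (fun ε : Fin (m + 1) → Bool => ε (Fin.last m))
    (fun ε => (X : Polynomial ℤ) ^ Dstat g (m + 1) ε)]
  rw [Fintype.sum_bool, keyA g hg0 m true, keyA g hg0 m false]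
  -- convert to the truncated pattern h
  set h : ℕ → Bool := fun i => if i < m + 1 then g i else false with hh
  have hprod : (∏ i ∈ Finset.range m, Tr (g i) (g (i + 1))) * rvec (g m) true +
      (∏ i ∈ Finset.range m, Tr (g i) (g (i + 1))) * rvec (g m) false =
      ∏ i ∈ Finset.range (m + 1), Tr (h i) (h (i + 1)) := by
    rw [Finset.prod_range_succ]
    have hc : ∀ i ∈ Finset.range m, Tr (h i) (h (i + 1)) = Tr (g i) (g (i + 1)) := by
      intro i hi
      rw [Finset.mem_range] at hi
      rw [hh]
      simp only [if_pos (by omega : i < m + 1), if_pos (by omega : i + 1 < m + 1)]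
    rw [Finset.prod_congr rfl hc]
    have hhm : h m = g m := by rw [hh]; simp only [if_pos (by omega : m < m + 1)]
    have hhm1 : h (m + 1) = false := by rw [hh]; simp only [if_neg (by omega : ¬ m + 1 < m + 1)]
    rw [hhm, hhm1]
    cases hgm : g m <;> simp [Tr, rvec, uvec] <;> ring
  rw [hprod]
  -- apply the counting lemmas
  have hh0 : h 0 = false := by rw [hh]; simp only [if_pos (by omega : 0 < m + 1)]; exact hg0
  have hhtop : h (m + 1) = false := by rw [hh]; simp only [if_neg (by omega : ¬ m + 1 < m + 1)]
  obtain ⟨hB, hBle⟩ := keyB h (m + 1)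
  have hpq : pcnt h (m + 1) = qcnt h (m + 1) := (keyC h hh0 (m + 1)).1 hhtop
  have hpk : pcnt h (m + 1) = pk (m + 1) w := pcnt_eq_pk (m + 1) (by omega) w
  rw [hB, ← hpq, hpk]
  have h2p : 2 * pk (m + 1) w ≤ m + 1 := by omega
  have hexp : m + 1 - (pk (m + 1) w + pk (m + 1) w) = m + 1 - 2 * pk (m + 1) w := by omega
  rw [hexp, mul_pow]
  have : (2 : Polynomial ℤ) ^ pk (m + 1) w * X ^ pk (m + 1) w * 2 ^ pk (m + 1) w =
      4 ^ pk (m + 1) w * X ^ pk (m + 1) w := by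
    rw [(by norm_num : (4 : Polynomial ℤ) = 2 * 2), mul_pow]; ring
  rw [this]

theorem typeB_gamma (n : ℕ) (hn : 1 ≤ n) :
    ∑ σ : Equiv.Perm (Fin n) × (Fin n → Bool), (X : Polynomial ℤ) ^ desB n σ =
      ∑ w : Equiv.Perm (Fin n),
        (4 : Polynomial ℤ) ^ pk n w * X ^ pk n w * (1 + X) ^ (n - 2 * pk n w) := by
  rw [Fintype.sum_prod_type]
  exact Finset.sum_congr rfl fun w _ => perm_sum n hn w
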